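/- arXiv:1812.01526 — 3 statements merged into one kernel-verified Lean document; each statement's English description precedes it below -/
import Mathlib

section
/- Let A and B be abelian categories and let F : A ⥤ B be a fully faithful functor admitting a right adjoint U. Assume that every object Y of B admits an epimorphism F X ⟶ Y from an object X of A. Then for every object Y of B the counit morphism F (U Y) ⟶ Y is an isomorphism; consequently F is an equivalence of categories. -/
open CategoryTheory CategoryTheory.Limits

universe v₁ v₂ u₁ u₂

/-- If `F : A ⥤ B` is a fully faithful functor between abelian categories admitting a right
adjoint `U`, and every object of `B` admits an epimorphism from an object of the form `F X`,
then every counit morphism `F (U Y) ⟶ Y` is an isomorphism; consequently `F` is an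
equivalence of categories. -/
theorem counit_isIso_and_isEquivalence_of_fullyFaithful_of_epi
    {A : Type u₁} {B : Type u₂} [Category.{v₁} A] [Category.{v₂} B]
    [Abelian A] [Abelian B] (F : A ⥤ B) (U : B ⥤ A) (adj : F ⊣ U)
    [F.Full] [F.Faithful]
    (h : ∀ Y : B, ∃ (X : A) (f : F.obj X ⟶ Y), Epi f) :
    (∀ Y : B, IsIso (adj.counit.app Y)) ∧ F.IsEquivalence := by
  have hiso : ∀ Y : B, IsIso (adj.counit.app Y) := by
    intro Y
    -- counit is epi
    obtain ⟨X, f, hf⟩ := h Y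
    have hεFX : IsIso (adj.counit.app (F.obj X)) := by
      have ht := adj.left_triangle_components X
      rw [← IsIso.inv_eq_of_hom_inv_id ht]
      infer_instance
    have hepi : Epi (adj.counit.app Y) := by
      have hnat : adj.counit.app (F.obj X) ≫ f =
          F.map (U.map f) ≫ adj.counit.app Y := (adj.counit.naturality f).symm
      have : Epi (F.map (U.map f) ≫ adj.counit.app Y) := by
        rw [← hnat]; exact epi_comp _ _
      exact epi_of_epi (F.map (U.map f)) (adj.counit.app Y)
    -- counit is mono: kernel is zero
    have hmono : Mono (adj.counit.app Y) := by
      obtain ⟨X', p, hp⟩ := h (kernel (adj.counit.app Y))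
      have hcomp : (p ≫ kernel.ι (adj.counit.app Y)) ≫ adj.counit.app Y = 0 := by
        simp
      obtain ⟨u, hu⟩ := F.map_surjective (p ≫ kernel.ι (adj.counit.app Y))
      haveI : PreservesLimits U := adj.rightAdjoint_preservesLimits
      haveI : U.Additive := U.additive_of_preserves_binary_products
      have hu0 : u = 0 := by
        have : (adj.homEquiv X' Y).symm u = 0 := by
          rw [Adjunction.homEquiv_counit, hu, hcomp]
        have := congrArg (adj.homEquiv X' Y) this
        simpa [Adjunction.homEquiv_unit, U.map_zero] using this
      have hk0 : kernel.ι (adj.counit.app Y) = 0 := by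
        have : p ≫ kernel.ι (adj.counit.app Y) = p ≫ 0 := by
          rw [← hu, hu0, F.map_zero, comp_zero]
        exact hp.left_cancellation _ _ this
      exact Abelian.mono_of_kernel_ι_eq_zero _ hk0
    exact isIso_of_mono_of_epi _
  refine ⟨hiso, ?_⟩
  have : F.EssSurj := ⟨fun Y => ⟨U.obj Y, ⟨asIso (adj.counit.app Y)⟩⟩⟩
  exact { }
end

section
/- Let R be a commutative local ring and I ⊆ R a proper ideal. If P is a bounded complex of finitely generated projective R-modules such that I • H_n(P) = H_n(P) for every integer n, then H_n(P) = 0 for every n, i.e. P is acyclic. -/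
open CategoryTheory CategoryTheory.Limits

universe u

section Aux

variable {R : Type u} [CommRing R]

/-- If `f : M →ₗ[R] N` has image exactly a finitely generated projective submodule `K`,
with `M` finitely generated projective, then `ker f` is finitely generated projective. -/
theorem ker_fg_proj_of_range_eq {M N : Type u} [AddCommGroup M] [AddCommGroup N]
    [Module R M] [Module R N] [Module.Finite R M] [Module.Projective R M]
    (f : M →ₗ[R] N) (K : Submodule R N) [Module.Finite R K] [Module.Projective R K]
    (hrange : LinearMap.range f = K) :
    Module.Finite R (LinearMap.ker f) ∧ Module.Projective R (LinearMap.ker f) := by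
  have hmem : ∀ x, f x ∈ K := fun x => hrange ▸ LinearMap.mem_range_self f x
  set φ : M →ₗ[R] K := f.codRestrict K hmem with hφdef
  have hφ : Function.Surjective φ := by
    rintro ⟨y, hy⟩
    rw [← hrange] at hy
    obtain ⟨x, hx⟩ := hy
    exact ⟨x, Subtype.ext hx⟩
  obtain ⟨s, hs⟩ := Module.projective_lifting_property φ LinearMap.id hφ
  set π : M →ₗ[R] M := LinearMap.id - s ∘ₗ φ with hπdef
  have hφs : ∀ k : K, φ (s k) = k := fun k => by
    have := congrArg (fun g => g k) hs
    simpa using this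
  have hπker : ∀ x, f (π x) = 0 := by
    intro x
    have h1 : f (s (φ x)) = f x := by
      have := congrArg (Subtype.val) (hφs (φ x))
      simpa [hφdef, LinearMap.codRestrict] using this
    simp [hπdef, h1]
  have hπfix : ∀ x ∈ LinearMap.ker f, π x = x := by
    intro x hx
    have hφx : φ x = 0 := Subtype.ext (by simpa [hφdef, LinearMap.codRestrict] using hx)
    simp [hπdef, hφx]
  set ρ : M →ₗ[R] LinearMap.ker f := π.codRestrict (LinearMap.ker f)
    (fun x => LinearMap.mem_ker.mpr (hπker x)) with hρdef
  have hρ : Function.Surjective ρ := fun z =>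
    ⟨(z : M), Subtype.ext (hπfix (z : M) z.2)⟩
  have hsplit : ρ ∘ₗ (LinearMap.ker f).subtype = LinearMap.id := by
    ext z
    exact congrArg Subtype.val (Subtype.ext (hπfix (z : M) z.2) :
      ρ ((LinearMap.ker f).subtype z) = z)
  exact ⟨Module.Finite.of_surjective ρ hρ,
    Module.Projective.of_split (LinearMap.ker f).subtype ρ hsplit⟩

/-- Nakayama for the homology of a short complex of modules. -/
theorem shortComplex_homology_isZero {R : Type u} [CommRing R] (I : Ideal R)
    (hI : I ≤ Ideal.jacobson ⊥) (S : ShortComplex (ModuleCat.{u} R))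
    (hfin : Module.Finite R (LinearMap.ker S.g.hom))
    (hsmul : I • (⊤ : Submodule R S.homology) = ⊤) : IsZero S.homology := by
  haveI := hfin
  haveI : Module.Finite R S.moduleCatLeftHomologyData.H :=
    Module.Finite.of_surjective (LinearMap.range S.moduleCatToCycles).mkQ
      (Submodule.mkQ_surjective _)
  haveI : Module.Finite R S.homology :=
    Module.Finite.of_surjective (S.moduleCatHomologyIso.inv).hom
      ((ConcreteCategory.bijective_of_isIso S.moduleCatHomologyIso.inv).2)
  have htop : (⊤ : Submodule R S.homology) = ⊥ :=
    Submodule.eq_bot_of_le_smul_of_le_jacobson_bot I ⊤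
      (Module.finite_def.mp ‹_›) (le_of_eq hsmul.symm) hI
  haveI : Subsingleton S.homology := by
    constructor
    intro x y
    have hx : x ∈ (⊥ : Submodule R S.homology) := htop ▸ Submodule.mem_top
    have hy : y ∈ (⊥ : Submodule R S.homology) := htop ▸ Submodule.mem_top
    rw [Submodule.mem_bot] at hx hy
    rw [hx, hy]
  exact ModuleCat.isZero_of_subsingleton _

end Aux

/-- Let `R` be a commutative local ring and `I ⊆ R` a proper ideal. If `P` is a bounded
complex of finitely generated projective `R`-modules such that `I • H_n(P) = H_n(P)` for
every `n : ℤ`, then every homology module `H_n(P)` vanishes, i.e. `P` is acyclic. -/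
theorem homology_isZero_of_smul_eq_top
    {R : Type u} [CommRing R] [IsLocalRing R] (I : Ideal R) (hI : I ≠ ⊤)
    (P : ChainComplex (ModuleCat.{u} R) ℤ)
    (hbdd : ∃ a b : ℤ, ∀ n : ℤ, (n < a ∨ b < n) → IsZero (P.X n))
    (hfg : ∀ n : ℤ, Module.Finite R (P.X n))
    (hproj : ∀ n : ℤ, Module.Projective R (P.X n))
    (hsmul : ∀ n : ℤ, I • (⊤ : Submodule R (P.homology n)) = ⊤)
    (n : ℤ) : IsZero (P.homology n) := by
  obtain ⟨a, b, hb⟩ := hbdd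
  have hIjac : I ≤ Ideal.jacobson ⊥ := by
    rw [IsLocalRing.jacobson_eq_maximalIdeal (⊥ : Ideal R) bot_ne_top]
    exact IsLocalRing.le_maximalIdeal hI
  -- kernels with congruent indices agree
  have kercongr : ∀ (m j j' : ℤ), j = j' →
      LinearMap.ker (P.d m j).hom = LinearMap.ker (P.d m j').hom := by
    rintro m j j' rfl; rfl
  -- the kernel of the short complex `g` is the concrete kernel
  have kersc : ∀ m : ℤ, LinearMap.ker (P.sc m).g.hom = LinearMap.ker (P.d m (m - 1)).hom := by
    intro m
    have h : (ComplexShape.down ℤ).next m = m - 1 := ChainComplex.next ℤ m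
    exact kercongr m _ _ h
  -- concrete characterization of exactness
  have key3 : ∀ m : ℤ, P.ExactAt m ↔
      LinearMap.range (P.d (m + 1) m).hom = LinearMap.ker (P.d m (m - 1)).hom := by
    intro m
    rw [P.exactAt_iff' (m + 1) m (m - 1) (by simp [ChainComplex.prev])
      (by simp [ChainComplex.next])]
    exact (P.sc' (m + 1) m (m - 1)).moduleCat_exact_iff_range_eq_ker
  set Q : ℤ → Prop := fun m =>
    Module.Finite R (LinearMap.ker (P.d m (m - 1)).hom) ∧
    Module.Projective R (LinearMap.ker (P.d m (m - 1)).hom) ∧ P.ExactAt m with hQdef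
  -- base case: everything below `a`
  have Qbase : ∀ m : ℤ, m < a → Q m := by
    intro m hm
    have hz : IsZero (P.X m) := hb m (Or.inl hm)
    haveI : Subsingleton (P.X m) := by
      constructor
      intro x y
      have h0 : (𝟙 (P.X m) : P.X m ⟶ P.X m) = 0 := hz.eq_of_src _ _
      calc x = (𝟙 (P.X m) : P.X m ⟶ P.X m) x := rfl
        _ = (0 : P.X m ⟶ P.X m) x := by rw [h0]
        _ = 0 := rfl
        _ = (0 : P.X m ⟶ P.X m) y := rfl
        _ = (𝟙 (P.X m) : P.X m ⟶ P.X m) y := by rw [h0]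
        _ = y := rfl
    haveI : Subsingleton (LinearMap.ker (P.d m (m - 1)).hom) := inferInstance
    refine ⟨?_, ?_, ?_⟩
    · exact ⟨⟨∅, Subsingleton.elim _ _⟩⟩
    · infer_instance
    · rw [key3 m]
      exact Subsingleton.elim _ _
  -- inductive step
  have Qstep : ∀ m : ℤ, Q m → Q (m + 1) := by
    intro m hQm
    obtain ⟨hfin, hproj', hex⟩ := hQm
    haveI := hfin; haveI := hproj'
    haveI := hfg (m + 1); haveI := hproj (m + 1)
    have hrange : LinearMap.range (P.d (m + 1) m).hom = LinearMap.ker (P.d m (m - 1)).hom :=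
      (key3 m).mp hex
    obtain ⟨hf2, hp2⟩ := ker_fg_proj_of_range_eq (P.d (m + 1) m).hom
      (LinearMap.ker (P.d m (m - 1)).hom) hrange
    have hker_eq : LinearMap.ker (P.d (m + 1) (m + 1 - 1)).hom = LinearMap.ker (P.d (m + 1) m).hom :=
      kercongr (m + 1) _ _ (by ring)
    have hf3 : Module.Finite R (LinearMap.ker (P.d (m + 1) (m + 1 - 1)).hom) := by
      rw [hker_eq]; exact hf2
    have hp3 : Module.Projective R (LinearMap.ker (P.d (m + 1) (m + 1 - 1)).hom) := by
      rw [hker_eq]; exact hp2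
    refine ⟨hf3, hp3, ?_⟩
    have hfinsc : Module.Finite R (LinearMap.ker (P.sc (m + 1)).g.hom) := by
      rw [kersc (m + 1)]; exact hf3
    have hzero : IsZero ((P.sc (m + 1)).homology) :=
      shortComplex_homology_isZero I hIjac (P.sc (m + 1)) hfinsc (hsmul (m + 1))
    exact (P.exactAt_iff_isZero_homology (m + 1)).mpr hzero
  -- all degrees
  have hQ : ∀ m : ℤ, Q m := by
    intro m
    rcases lt_or_ge m a with h | h
    · exact Qbase m h
    · have : ∀ k : ℤ, a - 1 ≤ k → Q k := fun k hk =>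
        Int.le_induction (Qbase (a - 1) (by omega)) (fun l _ hQl => Qstep l hQl) k hk
      exact this m (by omega)
  exact (P.exactAt_iff_isZero_homology n).mp (hQ n).2.2
end

section
/- Let R be a ring, n an integer, and P a bounded complex of finitely generated projective R-modules such that H_j(P) = 0 for all j < n. Then H_n(P) is a finitely presented R-module. -/
open CategoryTheory CategoryTheory.Limits

universe u

/-- Let `R` be a ring, `n` an integer and `P` a bounded complex of finitely generated
projective `R`-modules such that `H_j(P) = 0` for all `j < n`. Then `H_n(P)` is a finitely
presented `R`-module. -/
theorem finitePresentation_homology_of_bounded_of_vanishing_below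
    {R : Type u} [Ring R]
    (P : ChainComplex (ModuleCat.{u} R) ℤ)
    (hbdd : ∃ a b : ℤ, ∀ j : ℤ, (j < a ∨ b < j) → IsZero (P.X j))
    (hfg : ∀ j : ℤ, Module.Finite R (P.X j))
    (hproj : ∀ j : ℤ, Module.Projective R (P.X j))
    (n : ℤ)
    (hvanish : ∀ j : ℤ, j < n → IsZero (P.homology j)) :
    Module.FinitePresentation R (P.homology n) := by
  classical
  obtain ⟨a, b, hzero⟩ := hbdd
  -- exactness below `n`, expressed concretely
  have hexact : ∀ j : ℤ, j ≤ n →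
      LinearMap.range (P.d j (j - 1)).hom = LinearMap.ker (P.d (j - 1) (j - 1 - 1)).hom := by
    intro j hj
    have h1 : P.ExactAt (j - 1) := by
      rw [P.exactAt_iff_isZero_homology]
      exact hvanish (j - 1) (by omega)
    rw [P.exactAt_iff' j (j - 1) (j - 1 - 1)
      (by rw [ChainComplex.prev]; omega) (by rw [ChainComplex.next])] at h1
    exact (ShortComplex.moduleCat_exact_iff_range_eq_ker _).mp h1
  -- the key induction: kernels of the differentials are f.g. projective in degrees ≤ n
  have key : ∀ k : ℕ, ∀ j : ℤ, j ≤ n → j < a + k →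
      Module.Finite R (LinearMap.ker (P.d j (j - 1)).hom) ∧
        Module.Projective R (LinearMap.ker (P.d j (j - 1)).hom) := by
    intro k
    induction k with
    | zero =>
      intro j _ hja
      have hz : IsZero (P.X j) := hzero j (Or.inl (by omega))
      have hsub : Subsingleton (P.X j) := by
        constructor
        intro x y
        have h0 : (𝟙 (P.X j) : P.X j ⟶ P.X j) = 0 := hz.eq_of_src _ _
        calc x = (𝟙 (P.X j) : P.X j ⟶ P.X j) x := rfl
          _ = (0 : P.X j ⟶ P.X j) x := by rw [h0]
          _ = 0 := rfl
          _ = (0 : P.X j ⟶ P.X j) y := rfl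
          _ = (𝟙 (P.X j) : P.X j ⟶ P.X j) y := by rw [h0]
          _ = y := rfl
      have hsub' : Subsingleton (LinearMap.ker (P.d j (j - 1)).hom) :=
        ⟨fun x y => Subtype.ext (Subsingleton.elim _ _)⟩
      constructor
      · exact Module.finite_def.mpr ⟨∅, Subsingleton.elim _ _⟩
      · infer_instance
    | succ k ih =>
      intro j hjn hja
      by_cases hcase : j < a + k
      · exact ih j hjn hcase
      haveI := hfg j
      haveI := hproj j
      have hex := hexact j hjn
      obtain ⟨hK1, hK2⟩ := ih (j - 1) (by omega) (by omega)
      set g := P.d j (j - 1) with hg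
      -- the corestriction of `g` to the kernel of the next differential
      let q : P.X j →ₗ[R] LinearMap.ker (P.d (j - 1) (j - 1 - 1)).hom :=
        LinearMap.codRestrict _ g.hom
          (fun x => hex ▸ LinearMap.mem_range_self _ x)
      have hq : Function.Surjective q := by
        rintro ⟨y, hy⟩
        rw [← hex] at hy
        obtain ⟨x, hx⟩ := hy
        exact ⟨x, Subtype.ext hx⟩
      obtain ⟨s, hs⟩ := Module.projective_lifting_property q LinearMap.id hq
      have hqs : ∀ z, q (s z) = z := fun z => LinearMap.congr_fun hs z
      -- retraction of `P.X j` onto the kernel of `g`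
      have hmem : ∀ x : P.X j, x - s (q x) ∈ LinearMap.ker g.hom := by
        intro x
        have : q (x - s (q x)) = 0 := by
          rw [map_sub, hqs, sub_self]
        have := congrArg Subtype.val this
        simpa [q, LinearMap.codRestrict] using this
      let r : P.X j →ₗ[R] LinearMap.ker g.hom :=
        LinearMap.codRestrict _ (LinearMap.id - s.comp q) hmem
      have hri : ∀ y : LinearMap.ker g.hom, r y.val = y := by
        rintro ⟨y, hy⟩
        apply Subtype.ext
        have hqy : q y = 0 := Subtype.ext (by simpa [q, LinearMap.codRestrict] using hy)
        simp [r, LinearMap.codRestrict, hqy]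
      constructor
      · exact Module.Finite.of_surjective r (fun y => ⟨y.val, hri y⟩)
      · exact Module.Projective.of_split (LinearMap.ker g.hom).subtype r
          (by ext y; exact congrArg Subtype.val (hri y))
  -- conclude: the kernel of the differential at `n` is f.g. projective
  obtain ⟨hKfin, hKproj⟩ := key (n - a + 1).toNat n le_rfl (by omega)
  -- identify the homology with the concrete quotient
  let S := P.sc' (n + 1) n (n - 1)
  have eiso : P.homology n ≅ S.moduleCatLeftHomologyData.H :=
    (P.homologyIsoSc' (n + 1) n (n - 1)
      (by rw [ChainComplex.prev]) (by rw [ChainComplex.next])) ≪≫ S.moduleCatHomologyIso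
  have e : (LinearMap.ker S.g.hom ⧸ LinearMap.range S.moduleCatToCycles) ≃ₗ[R] P.homology n := eiso.symm.toLinearEquiv
  haveI : Module.Finite R (LinearMap.ker S.g.hom) := hKfin
  haveI : Module.Projective R (LinearMap.ker S.g.hom) := hKproj
  haveI : Module.FinitePresentation R (LinearMap.ker S.g.hom) :=
    Module.finitePresentation_of_projective R _
  have hfp : Module.FinitePresentation R
        (LinearMap.ker S.g.hom ⧸ LinearMap.range S.moduleCatToCycles) := by
    haveI := hfg (n + 1)
    apply Module.finitePresentation_of_surjective
      (LinearMap.range S.moduleCatToCycles).mkQ (Submodule.mkQ_surjective _)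
    rw [Submodule.ker_mkQ, LinearMap.range_eq_map]
    exact Submodule.FG.map _ (Module.finite_def.mp (hfg (n + 1)))
  exact Module.finitePresentation_of_surjective e.toLinearMap e.surjective
    (by rw [LinearEquiv.ker]; exact Submodule.fg_bot)
end
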